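/- Let an l-group G act continuously on an l-space X, let χ : G → ℂˣ be a character, let U ⊆ X be an open G-invariant subset and Z := X \ U its closed complement (both with the subspace topology). If D(U)^{G,χ} = 0 and D(Z)^{G,χ} = 0, then D(X)^{G,χ} = 0. -/

import Mathlib

open scoped Classical

noncomputable section

/-- The space `S(X)` of compactly supported locally constant `ℂ`-valued functions
on a topological space `X`, as a `ℂ`-submodule of `X → ℂ`. -/
def SSp (X : Type*) [TopologicalSpace X] : Submodule ℂ (X → ℂ) where
  carrier := {f | IsLocallyConstant f ∧ HasCompactSupport f}
  add_mem' := fun hf hg => ⟨hf.1.add hg.1, hf.2.add hg.2⟩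
  zero_mem' := ⟨IsLocallyConstant.const 0, by
    simpa using (HasCompactSupport.zero : HasCompactSupport (fun _ : X => (0:ℂ)))⟩
  smul_mem' := fun c f hf =>
    ⟨hf.1.comp fun y => c • y, by
      simpa [Pi.smul_def, Pi.mul_def] using hf.2.smul_left (f := fun _ : X => c)⟩

/-- The space `D(X) = S(X)*` of distributions on `X`. -/
abbrev Dst (X : Type*) [TopologicalSpace X] := SSp X →ₗ[ℂ] ℂ

/-- `T ∈ D(X)^{G,χ}`: the distribution `T` on `X` is `(G,χ)`-equivariant for the
action of `G` on `X`, i.e. `g·T = χ(g)·T` where `(g·T)(f) = T(x ↦ f(g·x))`. -/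
def IsEqvDist {X : Type*} [TopologicalSpace X] {G : Type*} [SMul G X]
    (χ : G → ℂ) (T : Dst X) : Prop :=
  ∀ (g : G) (f₁ f₂ : SSp X), (∀ x, f₂.1 x = f₁.1 (g • x)) → T f₂ = χ g * T f₁

/-- `T ∈ D(Y)^{G,χ}` for a `G`-invariant subset `Y ⊆ X` (with the subspace topology
and the restricted action): `g·T = χ(g)·T` where `(g·T)(f) = T(y ↦ f(g·y))`. -/
def IsEqvDistOn {X : Type*} [TopologicalSpace X] {G : Type*} [SMul G X]
    (Y : Set X) (χ : G → ℂ) (T : Dst Y) : Prop :=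
  ∀ (g : G) (f₁ f₂ : SSp Y),
    (∀ (x : X) (hx : x ∈ Y) (hgx : g • x ∈ Y), f₂.1 ⟨x, hx⟩ = f₁.1 ⟨g • x, hgx⟩) →
    T f₂ = χ g * T f₁

section Helpers
open Set

variable {X : Type*} [TopologicalSpace X]

lemma myIsClopen_support {f : X → ℂ} (hf : IsLocallyConstant f) :
    IsClopen (Function.support f) := by
  constructor
  · have h : Function.support f = (f ⁻¹' {0})ᶜ := by
      ext x; simp [Function.mem_support]
    rw [h]; exact (hf.isOpen_fiber 0).isClosed_compl
  · have h : Function.support f = f ⁻¹' ({0}ᶜ) := rfl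
    rw [h]; exact hf _

lemma myTsupport_eq {f : X → ℂ} (hf : IsLocallyConstant f) :
    tsupport f = Function.support f :=
  (myIsClopen_support hf).isClosed.closure_eq

lemma myIndicator_lc {S : Set X} (hS : IsClopen S) (c : ℂ) :
    IsLocallyConstant (S.indicator fun _ => c) := by
  rw [IsLocallyConstant.iff_exists_open]
  intro x
  by_cases hx : x ∈ S
  · exact ⟨S, hS.2, hx, fun y hy => by
      rw [indicator_of_mem hy, indicator_of_mem hx]⟩
  · exact ⟨Sᶜ, hS.1.isOpen_compl, hx, fun y hy => by
      rw [indicator_of_notMem hy, indicator_of_notMem hx]⟩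

/-- extension by zero -/
def extz (Y : Set X) (f : ↥Y → ℂ) : X → ℂ :=
  fun x => if h : x ∈ Y then f ⟨x, h⟩ else 0

lemma extz_mem [T2Space X] {U : Set X} (hU : IsOpen U) (f : SSp ↥U) :
    extz U f.1 ∈ SSp X := by
  have hK : IsCompact (Subtype.val '' tsupport f.1) :=
    f.2.2.image continuous_subtype_val
  have hKcl : IsClosed (Subtype.val '' tsupport f.1) := hK.isClosed
  have hKU : Subtype.val '' tsupport f.1 ⊆ U := by
    rintro x ⟨y, -, rfl⟩; exact y.2
  constructor
  · rw [IsLocallyConstant.iff_exists_open]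
    intro x
    by_cases hx : x ∈ U
    · obtain ⟨V, hVopen, hxV, hV⟩ :=
        (IsLocallyConstant.iff_exists_open _).1 f.2.1 ⟨x, hx⟩
      obtain ⟨W, hWopen, hVW⟩ := isOpen_induced_iff.1 hVopen
      refine ⟨W ∩ U, hWopen.inter hU, ⟨by rw [← hVW] at hxV; exact hxV, hx⟩, ?_⟩
      intro y ⟨hyW, hyU⟩
      have : f.1 ⟨y, hyU⟩ = f.1 ⟨x, hx⟩ := hV ⟨y, hyU⟩ (by rw [← hVW]; exact hyW)
      simp [extz, hyU, hx, this]
    · refine ⟨(Subtype.val '' tsupport f.1)ᶜ, hKcl.isOpen_compl,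
        fun hc => hx (hKU hc), ?_⟩
      intro y hy
      have hx0 : extz U f.1 x = 0 := by simp [extz, hx]
      rw [hx0]
      by_cases hyU : y ∈ U
      · have : f.1 ⟨y, hyU⟩ = 0 := by
          by_contra h
          exact hy ⟨⟨y, hyU⟩, subset_tsupport _ h, rfl⟩
        simp [extz, hyU, this]
      · simp [extz, hyU]
  · apply HasCompactSupport.of_support_subset_isCompact hK
    intro x hx
    by_cases hxU : x ∈ U
    · have : f.1 ⟨x, hxU⟩ ≠ 0 := by
        simpa [extz, hxU] using hx
      exact ⟨⟨x, hxU⟩, subset_tsupport _ this, rfl⟩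
    · exact absurd (by simp [extz, hxU]) hx

/-- restriction -/
def resz (Y : Set X) (f : X → ℂ) : ↥Y → ℂ := fun y => f y.1

lemma resz_lc {Y : Set X} {f : X → ℂ} (hf : IsLocallyConstant f) :
    IsLocallyConstant (resz Y f) :=
  hf.comp_continuous continuous_subtype_val

lemma resz_mem_closed {Z : Set X} (hZ : IsClosed Z) (f : SSp X) :
    resz Z f.1 ∈ SSp ↥Z := by
  refine ⟨resz_lc f.2.1, ?_⟩
  rw [HasCompactSupport, myTsupport_eq (resz_lc f.2.1)]
  apply (hZ.isClosedEmbedding_subtypeVal.isCompact_preimage f.2.2).of_isClosed_subset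
    (myIsClopen_support (resz_lc f.2.1)).1
  intro y hy
  exact subset_tsupport _ hy

lemma resz_mem_open {U : Set X} (hUopen : IsOpen U) (f : SSp X)
    (hsupp : Function.support f.1 ⊆ U) : resz U f.1 ∈ SSp ↥U := by
  refine ⟨resz_lc f.2.1, ?_⟩
  have hts : tsupport f.1 = Function.support f.1 := myTsupport_eq f.2.1
  have hKc : IsCompact (Function.support f.1) := hts ▸ f.2.2
  rw [HasCompactSupport, myTsupport_eq (resz_lc f.2.1)]
  have hs : Function.support (resz U f.1)
      = Subtype.val ⁻¹' Function.support f.1 := rfl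
  rw [hs, Topology.IsEmbedding.subtypeVal.isCompact_iff]
  have : Subtype.val '' (Subtype.val ⁻¹' Function.support f.1 : Set ↥U)
      = Function.support f.1 := by
    rw [Subtype.image_preimage_coe, inter_eq_self_of_subset_right hsupp]
  rw [this]; exact hKc

/-- compact open neighborhoods form a basis in an l-space -/
lemma exists_compact_clopen_nhd [LocallyCompactSpace X] [T2Space X]
    [TotallyDisconnectedSpace X] {x : X} {O : Set X} (hO : IsOpen O) (hx : x ∈ O) :
    ∃ W : Set X, IsClopen W ∧ IsCompact W ∧ x ∈ W ∧ W ⊆ O := by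
  obtain ⟨s, hscomp, hxs, hsO⟩ := exists_compact_subset hO hx
  obtain ⟨W, hWclopen, hxW, hWs⟩ :=
    loc_compact_Haus_tot_disc_of_zero_dim.mem_nhds_iff.1
      (mem_nhds_iff.2 ⟨interior s, Subset.rfl, isOpen_interior, hxs⟩)
  exact ⟨W, hWclopen, hscomp.of_isClosed_subset hWclopen.1
    (hWs.trans interior_subset), hxW, (hWs.trans interior_subset).trans hsO⟩

lemma extension_step (Z : Set X) (f : ↥Z → ℂ) {ι : Type*} (s : Finset ι)
    (W : ι → Set X) (c : ι → ℂ) :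
    (∀ i ∈ s, IsClopen (W i) ∧ IsCompact (W i)) →
    (∀ i ∈ s, ∀ (x : X) (hx : x ∈ Z), x ∈ W i → f ⟨x, hx⟩ = c i) →
    ∃ F : X → ℂ, IsLocallyConstant F ∧ HasCompactSupport F ∧
      (∀ (x : X) (hx : x ∈ Z), x ∈ ⋃ i ∈ s, W i → F x = f ⟨x, hx⟩) ∧
      (∀ x, x ∉ ⋃ i ∈ s, W i → F x = 0) := by
  classical
  induction s using Finset.induction_on with
  | empty =>
    intro _ _
    refine ⟨0, IsLocallyConstant.const 0, ?_, by simp, by simp⟩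
    simpa using (HasCompactSupport.zero : HasCompactSupport (fun _ : X => (0:ℂ)))
  | insert _ _ ha ih =>
    rename_i a s
    intro hW hc
    obtain ⟨F, hFlc, hFcs, hFeq, hFzero⟩ := ih
      (fun i hi => hW i (Finset.mem_insert_of_mem hi))
      (fun i hi => hc i (Finset.mem_insert_of_mem hi))
    set V : Set X := ⋃ i ∈ s, W i with hV
    have hVclopen : IsClopen V := by
      apply Set.Finite.isClopen_biUnion s.finite_toSet
      exact fun i hi => (hW i (Finset.mem_insert_of_mem hi)).1
    have haclopen : IsClopen (W a) := (hW a (Finset.mem_insert_self a s)).1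
    have hacomp : IsCompact (W a) := (hW a (Finset.mem_insert_self a s)).2
    have hdclopen : IsClopen (W a \ V) := haclopen.diff hVclopen
    have hdcomp : IsCompact (W a \ V) :=
      hacomp.of_isClosed_subset hdclopen.1 diff_subset
    set D : X → ℂ := (W a \ V).indicator (fun _ => c a) with hD
    have hDlc : IsLocallyConstant D := myIndicator_lc hdclopen _
    have hDcs : HasCompactSupport D := by
      rw [HasCompactSupport]
      exact hdcomp.of_isClosed_subset isClosed_closure
        (closure_minimal support_indicator_subset hdclopen.1)
    refine ⟨F + D, hFlc.add hDlc, hFcs.add hDcs, ?_, ?_⟩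
    · intro x hx hxU
      rw [Finset.set_biUnion_insert] at hxU
      by_cases hxV : x ∈ V
      · have h1 : F x = f ⟨x, hx⟩ := hFeq x hx hxV
        have h2 : D x = 0 := indicator_of_notMem (fun h => h.2 hxV) _
        simp [h1, h2]
      · have hxa : x ∈ W a := ((mem_union _ _ _).1 hxU).resolve_right hxV
        have h1 : F x = 0 := hFzero x hxV
        have h2 : D x = c a := indicator_of_mem (show x ∈ W a \ V from ⟨hxa, hxV⟩) _
        have h3 : f ⟨x, hx⟩ = c a := hc a (Finset.mem_insert_self a s) x hx hxa
        simp [h1, h2, h3]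
    · intro x hxU
      rw [Finset.set_biUnion_insert] at hxU
      have h1 : F x = 0 := hFzero x (fun h => hxU (mem_union_right _ h))
      have h2 : D x = 0 := indicator_of_notMem (fun h => hxU (mem_union_left _ h.1)) _
      simp [h1, h2]

lemma exists_extension [LocallyCompactSpace X] [T2Space X] [TotallyDisconnectedSpace X]
    {Z : Set X} (hZ : IsClosed Z) (f : SSp ↥Z) :
    ∃ F : SSp X, ∀ z : ↥Z, F.1 z = f.1 z := by
  classical
  set K : Set X := Subtype.val '' tsupport f.1 with hKdef
  have hKcomp : IsCompact K := f.2.2.image continuous_subtype_val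
  have hKZ : K ⊆ Z := by rintro x ⟨y, -, rfl⟩; exact y.2
  have hchoice : ∀ z : K, ∃ Wz : Set X, IsClopen Wz ∧ IsCompact Wz ∧ (z : X) ∈ Wz ∧
      ∀ (x : X) (hx : x ∈ Z), x ∈ Wz → f.1 ⟨x, hx⟩ = f.1 ⟨z, hKZ z.2⟩ := by
    intro z
    have hfib : IsOpen {y : ↥Z | f.1 y = f.1 ⟨z, hKZ z.2⟩} := f.2.1.isOpen_fiber _
    obtain ⟨O, hOopen, hOeq⟩ := isOpen_induced_iff.1 hfib
    have hzO : (z : X) ∈ O := by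
      have h0 : (⟨z, hKZ z.2⟩ : ↥Z) ∈ {y : ↥Z | f.1 y = f.1 ⟨z, hKZ z.2⟩} := rfl
      rw [← hOeq] at h0; exact h0
    obtain ⟨Wz, hWclopen, hWcomp, hzW, hWO⟩ := exists_compact_clopen_nhd hOopen hzO
    refine ⟨Wz, hWclopen, hWcomp, hzW, fun x hx hxW => ?_⟩
    have h0 : (⟨x, hx⟩ : ↥Z) ∈ Subtype.val ⁻¹' O := hWO hxW
    rw [hOeq] at h0; exact h0
  choose W hW1 hW2 hW3 hW4 using hchoice
  have hcover : K ⊆ ⋃ z : K, W z := fun x hx => mem_iUnion.2 ⟨⟨x, hx⟩, hW3 _⟩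
  obtain ⟨s, hs⟩ := hKcomp.elim_finite_subcover W (fun z => (hW1 z).2) hcover
  obtain ⟨F, hFlc, hFcs, hFeq, hFzero⟩ := extension_step Z f.1 s W
    (fun z => f.1 ⟨z, hKZ z.2⟩) (fun i _ => ⟨hW1 i, hW2 i⟩)
    (fun i _ x hx hxW => hW4 i x hx hxW)
  refine ⟨⟨F, hFlc, hFcs⟩, fun z => ?_⟩
  show F (z : X) = f.1 z
  by_cases hz : (z : X) ∈ ⋃ i ∈ s, W i
  · exact hFeq z z.2 hz
  · rw [hFzero _ hz]
    symm
    by_contra h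
    exact hz (hs ⟨z, subset_tsupport _ h, rfl⟩)

end Helpers

open Set in
/-- if an l-group `G` acts continuously on an l-space `X`, `U ⊆ X` is an
open `G`-invariant subset with closed complement `Z = X \ U`, and
`D(U)^{G,χ} = 0 = D(Z)^{G,χ}`, then `D(X)^{G,χ} = 0`. -/
theorem stmt4
    (G : Type*) [Group G] [TopologicalSpace G] [IsTopologicalGroup G]
    [LocallyCompactSpace G] [T2Space G] [TotallyDisconnectedSpace G]
    (X : Type*) [TopologicalSpace X] [LocallyCompactSpace X] [T2Space X]
    [TotallyDisconnectedSpace X]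
    [MulAction G X] [ContinuousSMul G X]
    (χ : G →* ℂˣ)
    (U : Set X) (hUopen : IsOpen U)
    (hUinv : ∀ (g : G) (x : X), x ∈ U → g • x ∈ U)
    (hU : ∀ T : Dst ↥U, IsEqvDistOn U (fun g => (χ g : ℂ)) T → T = 0)
    (hZ : ∀ T : Dst ↥(Set.univ \ U), IsEqvDistOn (Set.univ \ U) (fun g => (χ g : ℂ)) T → T = 0)
    (T : Dst X) (hT : IsEqvDist (fun g => (χ g : ℂ)) T) : T = 0 := by
  classical
  set Z : Set X := Set.univ \ U with hZdef
  have hZclosed : IsClosed Z := by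
    have : Z = Uᶜ := by ext x; simp [hZdef]
    rw [this]; exact hUopen.isClosed_compl
  have hZmem : ∀ x : X, x ∈ Z ↔ x ∉ U := by intro x; simp [hZdef]
  have hnU : ∀ (g : G) (x : X), x ∉ U → g • x ∉ U := by
    intro g x hx hgx
    have := hUinv g⁻¹ _ hgx
    rw [inv_smul_smul] at this
    exact hx this
  have hZinv : ∀ (g : G) (x : X), x ∈ Z → g • x ∈ Z := by
    intro g x hx
    rw [hZmem] at hx ⊢
    exact hnU g x hx
  -- the distribution T_U on U
  let TU : Dst ↥U :=
    { toFun := fun f => T ⟨extz U f.1, extz_mem hUopen f⟩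
      map_add' := by
        intro f g
        have h1 : extz U (f + g).1 = extz U f.1 + extz U g.1 := by
          funext x; by_cases hx : x ∈ U <;> simp [extz, hx]
        have h2 : (⟨extz U (f + g).1, extz_mem hUopen (f + g)⟩ : SSp X)
            = ⟨extz U f.1, extz_mem hUopen f⟩ + ⟨extz U g.1, extz_mem hUopen g⟩ :=
          Subtype.ext h1
        show T ⟨extz U (f + g).1, extz_mem hUopen (f + g)⟩
            = T ⟨extz U f.1, extz_mem hUopen f⟩ + T ⟨extz U g.1, extz_mem hUopen g⟩
        rw [h2, map_add]
      map_smul' := by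
        intro c f
        have h1 : extz U (c • f).1 = c • extz U f.1 := by
          funext x; by_cases hx : x ∈ U <;> simp [extz, hx]
        have h2 : (⟨extz U (c • f).1, extz_mem hUopen (c • f)⟩ : SSp X)
            = c • ⟨extz U f.1, extz_mem hUopen f⟩ := Subtype.ext h1
        show T ⟨extz U (c • f).1, extz_mem hUopen (c • f)⟩
            = c • T ⟨extz U f.1, extz_mem hUopen f⟩
        rw [h2, map_smul] }
  have hTU0 : TU = 0 := by
    apply hU
    intro g f₁ f₂ hff
    apply hT g
    intro x
    by_cases hx : x ∈ U
    · have hgx : g • x ∈ U := hUinv g x hx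
      show extz U f₂.1 x = extz U f₁.1 (g • x)
      simp only [extz, dif_pos hx, dif_pos hgx]
      exact hff x hx hgx
    · have hgx : g • x ∉ U := hnU g x hx
      show extz U f₂.1 x = extz U f₁.1 (g • x)
      simp [extz, hx, hgx]
  -- T kills everything vanishing on Z
  have hker : ∀ h : SSp X, (∀ (x : X), x ∈ Z → h.1 x = 0) → T h = 0 := by
    intro h hh
    have hsupp : Function.support h.1 ⊆ U := by
      intro x hx
      by_contra hxU
      exact hx (hh x ((hZmem x).2 hxU))
    have hres : resz U h.1 ∈ SSp ↥U := resz_mem_open hUopen h hsupp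
    have hext : extz U (resz U h.1) = h.1 := by
      funext x
      by_cases hx : x ∈ U
      · simp [extz, resz, hx]
      · have h0 : h.1 x = 0 := hh x ((hZmem x).2 hx)
        simp [extz, hx, h0]
    have h1 : T h = TU ⟨resz U h.1, hres⟩ := by
      show T h = T ⟨extz U (resz U h.1), _⟩
      congr 1
      exact Subtype.ext hext.symm
    rw [h1, hTU0]
    rfl
  -- extension operator from Z
  let E : SSp ↥Z → SSp X := fun f => (exists_extension hZclosed f).choose
  have hE : ∀ (f : SSp ↥Z) (z : ↥Z), (E f).1 z = f.1 z :=
    fun f => (exists_extension hZclosed f).choose_spec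
  let TZ : Dst ↥Z :=
    { toFun := fun f => T (E f)
      map_add' := by
        intro f g
        have h0 : T (E (f + g) - E f - E g) = 0 := by
          apply hker
          intro x hx
          show (E (f + g)).1 x - (E f).1 x - (E g).1 x = 0
          rw [hE (f + g) ⟨x, hx⟩, hE f ⟨x, hx⟩, hE g ⟨x, hx⟩]
          show f.1 ⟨x, hx⟩ + g.1 ⟨x, hx⟩ - f.1 ⟨x, hx⟩ - g.1 ⟨x, hx⟩ = 0
          ring
        rw [map_sub, map_sub] at h0
        show T (E (f + g)) = T (E f) + T (E g)
        linear_combination h0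
      map_smul' := by
        intro c f
        have h0 : T (E (c • f) - c • E f) = 0 := by
          apply hker
          intro x hx
          show (E (c • f)).1 x - c * (E f).1 x = 0
          rw [hE (c • f) ⟨x, hx⟩, hE f ⟨x, hx⟩]
          show c * f.1 ⟨x, hx⟩ - c * f.1 ⟨x, hx⟩ = 0
          ring
        rw [map_sub, map_smul] at h0
        rw [smul_eq_mul] at h0
        show T (E (c • f)) = c • T (E f)
        rw [smul_eq_mul]
        linear_combination h0 }
  have hTZ0 : TZ = 0 := by
    apply hZ
    intro g f₁ f₂ hff
    have hlc : IsLocallyConstant (fun x : X => (E f₁).1 (g • x)) :=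
      (E f₁).2.1.comp_continuous (continuous_const_smul g)
    have hcs : HasCompactSupport (fun x : X => (E f₁).1 (g • x)) :=
      (E f₁).2.2.comp_homeomorph (Homeomorph.smul g)
    set h₂ : SSp X := ⟨fun x : X => (E f₁).1 (g • x), hlc, hcs⟩ with hh₂
    have step1 : T h₂ = (χ g : ℂ) * T (E f₁) := hT g (E f₁) h₂ (fun x => rfl)
    have step2 : T (E f₂) = T h₂ := by
      have h0 : T (E f₂ - h₂) = 0 := by
        apply hker
        intro x hx
        show (E f₂).1 x - (E f₁).1 (g • x) = 0
        have hgx : g • x ∈ Z := hZinv g x hx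
        rw [hE f₂ ⟨x, hx⟩, hE f₁ ⟨g • x, hgx⟩, hff x hx hgx]
        ring
      rw [map_sub] at h0
      exact sub_eq_zero.1 h0
    show T (E f₂) = (χ g : ℂ) * T (E f₁)
    rw [step2, step1]
  -- conclusion
  ext f
  show T f = 0
  have hres := resz_mem_closed hZclosed f
  have h1 : T (f - E ⟨resz Z f.1, hres⟩) = 0 := by
    apply hker
    intro x hx
    show f.1 x - (E ⟨resz Z f.1, hres⟩).1 x = 0
    rw [hE ⟨resz Z f.1, hres⟩ ⟨x, hx⟩]
    show f.1 x - f.1 x = 0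
    ring
  have h2 : T (E ⟨resz Z f.1, hres⟩) = 0 := by
    have : TZ ⟨resz Z f.1, hres⟩ = 0 := by rw [hTZ0]; rfl
    exact this
  rw [map_sub, h2, sub_zero] at h1
  exact h1
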